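/- Let F be a finite field with q elements and n, p, r positive integers with n ≥ p ≥ r. If 𝒱 is an additive subgroup of Mat_{n,p}(F) in which every matrix has rank at most r, then the cardinality of 𝒱 is at most q^{nr}. -/

import Mathlib

open Polynomial Module

/-- Auxiliary: a degree-`n` extension of the finite field `F`, realized as the
splitting field of `X ^ (#F) ^ n - X`. -/
noncomputable abbrev FFExt (F : Type*) [Field F] [Fintype F] (n : ℕ) : Type _ :=
  Polynomial.SplittingField ((X : F[X]) ^ (Fintype.card F) ^ n - X)

theorem FFExt.natCard_eq (F : Type*) [Field F] [Fintype F] (n : ℕ) (hn : n ≠ 0) :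
    Nat.card (FFExt F n) = Fintype.card F ^ n := by
  classical
  set q := Fintype.card F with hqdef
  set K := FFExt F n with hK
  set g : F[X] := X ^ q ^ n - X with hg
  have hq : 1 < q := Fintype.one_lt_card
  haveI : Finite K := Module.finite_of_finite F
  haveI : Fintype K := Fintype.ofFinite K
  have aux : g ≠ 0 := FiniteField.X_pow_card_pow_sub_X_ne_zero _ hn hq
  set ℓ := ringChar F with hl
  haveI : CharP F ℓ := ringChar.charP F
  haveI hfact : Fact ℓ.Prime := ⟨CharP.char_is_prime F ℓ⟩
  haveI : CharP K ℓ := charP_of_injective_algebraMap (algebraMap F K).injective ℓ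
  obtain ⟨k, hkp, hqk⟩ := FiniteField.card F ℓ
  have hqn : q ^ n = ℓ ^ ((k : ℕ) * n) := by rw [hqdef, hqk, ← pow_mul]
  have hdvd : ℓ ∣ q ^ n := by
    rw [hqn]
    exact dvd_pow_self ℓ (by positivity)
  have key : Fintype.card (g.rootSet K) = g.natDegree :=
    card_rootSet_eq_natDegree (galois_poly_separable ℓ (q ^ n) hdvd)
      (SplittingField.splits g)
  have nat_degree_eq : g.natDegree = q ^ n :=
    FiniteField.X_pow_card_pow_sub_X_natDegree_eq _ hn hq
  rw [nat_degree_eq] at key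
  suffices huniv : g.rootSet K = Set.univ by
    have hcc : Fintype.card K = Fintype.card (g.rootSet K) :=
      Fintype.card_congr ((Equiv.Set.univ K).symm.trans (Equiv.setCongr huniv.symm))
    rw [Nat.card_eq_fintype_card, hcc, key]
  rw [Set.eq_univ_iff_forall]
  suffices h : ∀ x, x ∈ (⊤ : Subalgebra F K) → x ∈ g.rootSet K by
    intro x; exact h x trivial
  rw [← SplittingField.adjoin_rootSet]
  simp_rw [Algebra.mem_adjoin_iff]
  intro x hx
  refine Subring.closure_induction ?_ ?_ ?_ ?_ ?_ ?_ hx <;> simp_rw [mem_rootSet_of_ne aux]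
  · rintro x (⟨r, rfl⟩ | hx)
    · simp only [hg, map_sub, map_pow, aeval_X]
      rw [← map_pow, FiniteField.pow_card_pow, sub_self]
    · rwa [mem_rootSet_of_ne aux] at hx
  · simp [hg, zero_pow (Nat.pow_pos (show 0 < q by omega)).ne']
  · simp [hg]
  · intro x y _ _ hx hy
    simp only [hg, map_sub, aeval_X_pow, aeval_X, sub_eq_zero] at hx hy ⊢
    simp only [hqn] at hx hy ⊢
    rw [add_pow_char_pow, hx, hy]
  · intro x _ hx
    simp only [hg, map_sub, aeval_X_pow, aeval_X, sub_eq_zero] at hx ⊢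
    simp only [hqn] at hx ⊢
    rw [neg_pow, hx, neg_one_pow_char_pow]
    ring
  · intro x y _ _ hx hy
    simp only [hg, map_sub, aeval_X_pow, aeval_X, sub_eq_zero] at hx hy ⊢
    simp only [hqn] at hx hy ⊢
    rw [mul_pow, hx, hy]

theorem FFExt.finrank_eq (F : Type*) [Field F] [Fintype F] (n : ℕ) (hn : n ≠ 0) :
    Module.finrank F (FFExt F n) = n := by
  haveI : Finite (FFExt F n) := Module.finite_of_finite F
  haveI : Fintype (FFExt F n) := Fintype.ofFinite _
  have h1 : Fintype.card (FFExt F n) = Fintype.card F ^ finrank F (FFExt F n) :=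
    card_eq_pow_finrank
  have h2 := FFExt.natCard_eq F n hn
  rw [Nat.card_eq_fintype_card, h1] at h2
  exact Nat.pow_right_injective (Fintype.one_lt_card (α := F)) h2

/-- A Gabidulin-style additive code in `Mat_{n,p}(F)` of size `q^{n(p-r)}` all of whose
nonzero elements have rank greater than `r`. -/
theorem exists_min_rank_code (F : Type*) [Field F] [Fintype F] (n p r : ℕ)
    (hp : 0 < p) (hrp : r ≤ p) (hpn : p ≤ n) :
    ∃ D : AddSubgroup (Matrix (Fin n) (Fin p) F),
      Nat.card D = Fintype.card F ^ (n * (p - r)) ∧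
      ∀ M ∈ D, M ≠ 0 → r < M.rank := by
  classical
  set q := Fintype.card F with hqdef
  have hq : 1 < q := Fintype.one_lt_card
  have hn : n ≠ 0 := by omega
  set s := p - r with hs
  set K := FFExt F n with hK
  haveI : Finite K := Module.finite_of_finite F
  haveI : Fintype K := Fintype.ofFinite K
  have hrankK : finrank F K = n := FFExt.finrank_eq F n hn
  have hcardK : Fintype.card K = q ^ n := by
    rw [← Nat.card_eq_fintype_card, FFExt.natCard_eq F n hn]
  set ℓ := ringChar F with hl
  haveI : CharP F ℓ := ringChar.charP F
  haveI hfact : Fact ℓ.Prime := ⟨CharP.char_is_prime F ℓ⟩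
  haveI : CharP K ℓ := charP_of_injective_algebraMap (algebraMap F K).injective ℓ
  obtain ⟨k, hkp, hqk⟩ := FiniteField.card F ℓ
  have hqn : ∀ i : ℕ, q ^ i = ℓ ^ ((k : ℕ) * i) := fun i => by rw [hqdef, hqk, ← pow_mul]
  have hpow_add : ∀ (i : ℕ) (x y : K), (x + y) ^ q ^ i = x ^ q ^ i + y ^ q ^ i := by
    intro i x y
    simp only [hqn i]
    exact add_pow_char_pow x y ℓ _
  have hpow_smul : ∀ (i : ℕ) (c : F) (x : K), (c • x) ^ q ^ i = c • x ^ q ^ i := by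
    intro i c x
    rw [Algebra.smul_def, Algebra.smul_def, mul_pow, ← map_pow, FiniteField.pow_card_pow]
  -- a `p`-dimensional subspace of `K`
  let bK : Basis (Fin n) F K := Module.finBasisOfFinrankEq F K hrankK
  let v : Fin p → K := bK ∘ Fin.castLE hpn
  have hv : LinearIndependent F v := bK.linearIndependent.comp _ (Fin.castLE_injective hpn)
  set U : Submodule F K := Submodule.span F (Set.range v) with hU
  let bU : Basis (Fin p) F U := Basis.span hv
  have hfinU : finrank F U = p := by rw [hU, finrank_span_eq_card hv, Fintype.card_fin]
  -- the additive family of linearized-polynomial maps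
  let Φ : (Fin s → K) →+ (U →ₗ[F] K) := AddMonoidHom.mk'
    (fun a =>
      { toFun := fun x => ∑ i : Fin s, a i * (x : K) ^ q ^ (i : ℕ)
        map_add' := by
          intro x y
          simp only [Submodule.coe_add, hpow_add, mul_add]
          rw [← Finset.sum_add_distrib]
        map_smul' := by
          intro c x
          simp only [SetLike.val_smul, hpow_smul, RingHom.id_apply, Finset.smul_sum,
            mul_smul_comm] })
    (by
      intro a b
      ext x
      simp only [LinearMap.coe_mk, AddHom.coe_mk, LinearMap.add_apply, Pi.add_apply, add_mul]
      rw [← Finset.sum_add_distrib])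
  have hker : ∀ a : Fin s → K, a ≠ 0 → r < finrank F (LinearMap.range (Φ a)) := by
    intro a ha
    obtain ⟨i₀, hi₀⟩ := Function.ne_iff.mp ha
    simp only [Pi.zero_apply] at hi₀
    have hs1 : 1 ≤ s := i₀.pos
    set P : K[X] := ∑ i : Fin s, C (a i) * X ^ q ^ (i : ℕ) with hP
    have hPne : P ≠ 0 := by
      intro h
      apply hi₀
      have hco := congrArg (fun Q : K[X] => Q.coeff (q ^ (i₀ : ℕ))) h
      simp only [hP, finset_sum_coeff, coeff_C_mul, coeff_X_pow, coeff_zero, mul_ite,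
        mul_one, mul_zero] at hco
      rw [Finset.sum_eq_single i₀] at hco
      · simpa using hco
      · intro j _ hj
        have hne : ¬ (q ^ (i₀ : ℕ) = q ^ (j : ℕ)) := fun hh =>
          hj (Fin.ext (Nat.pow_right_injective hq hh.symm))
        simp [hne]
      · simp
    have hdeg : P.natDegree ≤ q ^ (s - 1) := by
      apply Polynomial.natDegree_sum_le_of_forall_le
      intro i _
      refine le_trans (natDegree_C_mul_le _ _) ?_
      rw [natDegree_X_pow]
      exact Nat.pow_le_pow_right (by omega) (by omega)
    haveI : Fintype (LinearMap.ker (Φ a)) := Fintype.ofFinite _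
    have hcardker : Fintype.card (LinearMap.ker (Φ a)) ≤ q ^ (s - 1) := by
      have hmem : ∀ x : LinearMap.ker (Φ a), ((x : U) : K) ∈ P.roots.toFinset := by
        intro x
        rw [Multiset.mem_toFinset, mem_roots hPne]
        have hx : Φ a (x : U) = 0 := x.2
        simp only [hP, IsRoot, eval_finset_sum, eval_mul, eval_C, eval_pow, eval_X]
        exact hx
      have hinj : Function.Injective
          (fun x : LinearMap.ker (Φ a) => (⟨((x : U) : K), hmem x⟩ :
            {y // y ∈ P.roots.toFinset})) := by
        intro x y hxy
        have hval : ((x : U) : K) = ((y : U) : K) := by simpa using congrArg Subtype.val hxy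
        exact Subtype.ext (Subtype.ext hval)
      calc Fintype.card (LinearMap.ker (Φ a)) ≤ Fintype.card {y // y ∈ P.roots.toFinset} :=
            Fintype.card_le_of_injective _ hinj
        _ = P.roots.toFinset.card := Fintype.card_coe _
        _ ≤ Multiset.card P.roots := Multiset.toFinset_card_le _
        _ ≤ P.natDegree := P.card_roots'
        _ ≤ q ^ (s - 1) := hdeg
    have hk2 : finrank F (LinearMap.ker (Φ a)) ≤ s - 1 := by
      have hce : Fintype.card (LinearMap.ker (Φ a)) = q ^ finrank F (LinearMap.ker (Φ a)) :=
        by rw [Module.card_eq_pow_finrank (K := F)]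
      rw [hce] at hcardker
      exact (Nat.pow_le_pow_iff_right hq).mp hcardker
    have hsum := LinearMap.finrank_range_add_finrank_ker (Φ a)
    rw [hfinU] at hsum
    omega
  -- pass to matrices
  let Θ : (Fin s → K) →+ Matrix (Fin n) (Fin p) F :=
    ((LinearMap.toMatrix bU bK).toLinearMap.toAddMonoidHom).comp Φ
  have hΘrank : ∀ a : Fin s → K, (Θ a).rank = finrank F (LinearMap.range (Φ a)) := by
    intro a
    rw [show Θ a = LinearMap.toMatrix bU bK (Φ a) from rfl,
      Matrix.rank_eq_finrank_range_toLin _ bK bU, Matrix.toLin_toMatrix]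
  have hΘinj : Function.Injective Θ := by
    rw [injective_iff_map_eq_zero]
    intro a h0
    by_contra hne
    have h1 := hker a hne
    have hΦ0 : Φ a = 0 := by
      apply (LinearMap.toMatrix bU bK).injective
      rw [show (LinearMap.toMatrix bU bK) (Φ a) = Θ a from rfl, h0, map_zero]
    rw [hΦ0, LinearMap.range_zero] at h1
    rw [finrank_bot] at h1
    omega
  refine ⟨Θ.range, ?_, ?_⟩
  · have hb : Function.Bijective
        (fun a : (Fin s → K) => (⟨Θ a, AddMonoidHom.mem_range.mpr ⟨a, rfl⟩⟩ : Θ.range)) := by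
      constructor
      · intro x y hxy
        exact hΘinj (congrArg Subtype.val hxy)
      · rintro ⟨m, a, rfl⟩
        exact ⟨a, rfl⟩
    rw [← Nat.card_eq_of_bijective _ hb, Nat.card_eq_fintype_card, Fintype.card_fun,
      hcardK, Fintype.card_fin, ← pow_mul]
  · rintro M ⟨a, rfl⟩ hM0
    have ha : a ≠ 0 := by
      rintro rfl
      exact hM0 (map_zero Θ)
    rw [hΘrank a]
    exact hker a ha

/-- Over a finite field with `q` elements, an additive subgroup of `Mat_{n,p}(F)`
(`n ≥ p ≥ r > 0`) in which every matrix has rank at most `r` has cardinality at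
most `q^(nr)`. -/
theorem flanders_finite_field (F : Type*) [Field F] [Fintype F] (n p r : ℕ)
    (hr : 0 < r) (hrp : r ≤ p) (hpn : p ≤ n)
    (V : AddSubgroup (Matrix (Fin n) (Fin p) F))
    (hrk : ∀ M ∈ V, Matrix.rank M ≤ r) :
    Nat.card V ≤ (Fintype.card F) ^ (n * r) := by
  classical
  set q := Fintype.card F with hqdef
  have hq : 1 < q := Fintype.one_lt_card
  obtain ⟨D, hcardD, hrankD⟩ := exists_min_rank_code F n p r (by omega) hrp hpn
  have hinj : Function.Injective
      (fun vd : V × D => (vd.1 : Matrix (Fin n) (Fin p) F) + (vd.2 : Matrix (Fin n) (Fin p) F)) := by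
    rintro ⟨v, d⟩ ⟨v', d'⟩ h
    simp only at h
    have hsub : (v : Matrix (Fin n) (Fin p) F) - v' = (d' : Matrix (Fin n) (Fin p) F) - d := by
      rw [sub_eq_sub_iff_add_eq_add, h, add_comm]
    have hdd : (d' : Matrix (Fin n) (Fin p) F) = d := by
      by_contra hne
      have hmem : ((d' : Matrix (Fin n) (Fin p) F) - d) ∈ D := sub_mem d'.2 d.2
      have hne0 : (d' : Matrix (Fin n) (Fin p) F) - d ≠ 0 := sub_ne_zero.mpr hne
      have h1 := hrankD _ hmem hne0
      have hmemV : ((v : Matrix (Fin n) (Fin p) F) - v') ∈ V := sub_mem v.2 v'.2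
      have h2 := hrk _ hmemV
      rw [hsub] at h2
      omega
    have hvv : (v : Matrix (Fin n) (Fin p) F) = v' := by
      have := hsub
      rw [hdd, sub_self, sub_eq_zero] at this
      exact this
    exact Prod.ext (Subtype.ext hvv) (Subtype.ext hdd.symm)
  have hcount := Nat.card_le_card_of_injective _ hinj
  rw [Nat.card_prod] at hcount
  have hM : Nat.card (Matrix (Fin n) (Fin p) F) = q ^ (n * p) := by
    rw [Nat.card_eq_fintype_card]
    show Fintype.card (Fin n → Fin p → F) = q ^ (n * p)
    rw [Fintype.card_fun, Fintype.card_fun, Fintype.card_fin, Fintype.card_fin, ← pow_mul,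
      mul_comm p n]
  have hkey : Nat.card V * q ^ (n * (p - r)) ≤ q ^ (n * r) * q ^ (n * (p - r)) := by
    calc Nat.card V * q ^ (n * (p - r)) = Nat.card V * Nat.card D := by rw [hcardD]
      _ ≤ Nat.card (Matrix (Fin n) (Fin p) F) := hcount
      _ = q ^ (n * p) := hM
      _ = q ^ (n * r) * q ^ (n * (p - r)) := by
          rw [← pow_add, ← Nat.mul_add]
          congr 2
          omega
  exact Nat.le_of_mul_le_mul_right hkey (by positivity)
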